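/- Fix an integer $b \ge 2$ and $\gamma > 0$. Let $(F_k)_{k \ge 0}$ be a sequence of functions from $[0,1]$ to $\mathbb{C}$, let $T_M = \{ i b^{-M} : 0 \le i \le b^M \}$, and suppose there is $n_1 \ge 1$ such that for all $n \ge n_1$: (a) for every $b$-adic interval $I_w$ of generation $n$ with endpoints $t_w, t_w + b^{-n}$ one has $\max_{0 \le k \le n} |F_k(t_w + b^{-n}) - F_k(t_w)| \le b^{-n\gamma}$, and (b) $\max_{t \in T_n} |F_n(t) - F_{n-1}(t)| \le b^{-n\gamma}$. Then, with $C_\gamma = 2b/(1 - b^{-\gamma})$, for all $t, s \in \bigcup_{M \ge 1} T_M$ with $|t - s| \le b^{-n_1}$ one has $\sup_{k \ge 1} |F_k(t) - F_k(s)| \le C_\gamma |t-s|^\gamma$. -/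

import Mathlib

open Filter

/-- The set `T_M = { i b^{-M} : 0 ≤ i ≤ b^M }` of `b`-adic points of generation `M`. -/
def badicPts (b M : ℕ) : Set ℝ :=
  {x : ℝ | ∃ i : ℕ, i ≤ b ^ M ∧ x = (i : ℝ) * ((b : ℝ) ^ M)⁻¹}

lemma badicPts_mono {b : ℕ} (hb : 0 < b) {M N : ℕ} (h : M ≤ N) :
    badicPts b M ⊆ badicPts b N := by
  rintro x ⟨i, hi, rfl⟩
  have hbR : (0:ℝ) < (b:ℝ) := by exact_mod_cast hb
  refine ⟨i * b ^ (N - M), ?_, ?_⟩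
  · calc i * b ^ (N - M) ≤ b ^ M * b ^ (N - M) := Nat.mul_le_mul_right _ hi
      _ = b ^ N := by rw [← pow_add]; congr 1; omega
  · have hM : ((b:ℝ) ^ M) ≠ 0 := pow_ne_zero _ (ne_of_gt hbR)
    have hNM : ((b:ℝ) ^ (N - M)) ≠ 0 := pow_ne_zero _ (ne_of_gt hbR)
    have hsplit : (b:ℝ) ^ N = (b:ℝ) ^ M * (b:ℝ) ^ (N - M) := by
      rw [← pow_add]; congr 1; omega
    push_cast
    rw [hsplit]
    field_simp

set_option maxHeartbeats 1000000 in
lemma key_chain (b : ℕ) (hb : 2 ≤ b) (γ : ℝ) (hγ : 0 < γ)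
    (F : ℕ → ℝ → ℂ) (n₁ : ℕ) (hn₁ : 1 ≤ n₁)
    (ha : ∀ n : ℕ, n₁ ≤ n → ∀ i : ℕ, i < b ^ n → ∀ k : ℕ, k ≤ n →
      ‖F k (((i : ℝ) + 1) * ((b : ℝ) ^ n)⁻¹) - F k ((i : ℝ) * ((b : ℝ) ^ n)⁻¹)‖ ≤
        (b : ℝ) ^ (-(n : ℝ) * γ))
    (hbnd : ∀ n : ℕ, n₁ ≤ n → ∀ t ∈ badicPts b n,
      ‖F n t - F (n - 1) t‖ ≤ (b : ℝ) ^ (-(n : ℝ) * γ))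
    (M p q : ℕ) (hqp : q < p) (hp : p ≤ b ^ M)
    (hclose : (p : ℝ) * ((b : ℝ) ^ M)⁻¹ - (q : ℝ) * ((b : ℝ) ^ M)⁻¹ ≤ ((b : ℝ) ^ n₁)⁻¹)
    (k : ℕ) :
    ‖F k ((p : ℝ) * ((b : ℝ) ^ M)⁻¹) - F k ((q : ℝ) * ((b : ℝ) ^ M)⁻¹)‖ ≤
      2 * b / (1 - (b : ℝ) ^ (-γ)) *
        ((p : ℝ) * ((b : ℝ) ^ M)⁻¹ - (q : ℝ) * ((b : ℝ) ^ M)⁻¹) ^ γ := by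
  classical
  have hb0 : (0:ℝ) < (b:ℝ) := by exact_mod_cast (by omega : 0 < b)
  have hb1 : (1:ℝ) < (b:ℝ) := by exact_mod_cast (by omega : 1 < b)
  set r : ℝ := (b:ℝ) ^ (-γ) with hrdef
  have hr0 : 0 < r := Real.rpow_pos_of_pos hb0 _
  have hr1 : r < 1 := Real.rpow_lt_one_of_one_lt_of_neg hb1 (by linarith)
  have h1r : (0:ℝ) < 1 - r := by linarith
  have hrn : ∀ m : ℕ, (b:ℝ) ^ (-(m:ℝ) * γ) = r ^ m := by
    intro m
    rw [show (-(m:ℝ) * γ) = (-γ) * (m:ℝ) by ring, Real.rpow_mul hb0.le,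
      Real.rpow_natCast]
  -- the distance
  set t : ℝ := (p : ℝ) * ((b : ℝ) ^ M)⁻¹ with htdef
  set s : ℝ := (q : ℝ) * ((b : ℝ) ^ M)⁻¹ with hsdef
  have hts : t - s = ((p:ℝ) - q) * ((b:ℝ)^M)⁻¹ := by rw [htdef, hsdef]; ring
  have hts0 : 0 < t - s := by
    rw [hts]
    have : (0:ℝ) < (p:ℝ) - q := by
      have : (q:ℝ) < p := by exact_mod_cast hqp
      linarith
    positivity
  -- choice of n
  have hPM : ((b:ℝ)^M)⁻¹ ≤ t - s := by
    rw [hts]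
    have h1 : (1:ℝ) ≤ (p:ℝ) - q := by
      have : (q:ℝ) + 1 ≤ p := by exact_mod_cast hqp
      linarith
    nlinarith [inv_pos.mpr (pow_pos hb0 M)]
  have hex : ∃ m : ℕ, ((b:ℝ)^m)⁻¹ ≤ t - s := ⟨M, hPM⟩
  set n : ℕ := Nat.find hex with hndef
  have hnP : ((b:ℝ)^n)⁻¹ ≤ t - s := Nat.find_spec hex
  have hnn₁ : n₁ ≤ n := by
    by_contra hcon
    push_neg at hcon
    have h1 : ((b:ℝ)^n₁)⁻¹ < ((b:ℝ)^n)⁻¹ := by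
      apply inv_strictAnti₀ (pow_pos hb0 n)
      exact pow_lt_pow_right₀ hb1 hcon
    linarith [hclose, hnP]
  have hnM : n ≤ M := Nat.find_le hPM
  have hn1 : 1 ≤ n := le_trans hn₁ hnn₁
  have hub : t - s < (b:ℝ) * ((b:ℝ)^n)⁻¹ := by
    have hmin := Nat.find_min hex (show n - 1 < n by omega)
    push_neg at hmin
    have heq : ((b:ℝ)^(n-1))⁻¹ = (b:ℝ) * ((b:ℝ)^n)⁻¹ := by
      have : (b:ℝ)^n = (b:ℝ)^(n-1) * b := by
        rw [← pow_succ]; congr 1; omega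
      rw [this]
      field_simp
    rw [← heq]
    exact hmin
  -- comparison r^n ≤ (t-s)^γ
  have hrpow_ts : r ^ n ≤ (t - s) ^ γ := by
    have h1 : (((b:ℝ)^n)⁻¹ : ℝ) ^ γ ≤ (t - s) ^ γ :=
      Real.rpow_le_rpow (by positivity) hnP hγ.le
    have hinv : ((b:ℝ)^n)⁻¹ = (b:ℝ) ^ (-(n:ℝ) : ℝ) := by
      rw [Real.rpow_neg hb0.le, Real.rpow_natCast]
    have h2 : (((b:ℝ)^n)⁻¹ : ℝ) ^ γ = r ^ n := by
      rw [hinv, ← Real.rpow_mul hb0.le]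
      exact hrn n
    linarith [h1, h2.symm.le]
  -- chaining lemma A
  have chainA : ∀ g : ℕ, n₁ ≤ g → ∀ k' : ℕ, k' ≤ g → ∀ i c : ℕ, i + c ≤ b ^ g →
      ‖F k' (((i + c : ℕ) : ℝ) * ((b:ℝ)^g)⁻¹) - F k' ((i:ℝ) * ((b:ℝ)^g)⁻¹)‖ ≤
        (c:ℝ) * r ^ g := by
    intro g hg k' hk' i c
    induction c with
    | zero => intro _; simp
    | succ c ih =>
      intro hic
      have h1 := ih (by omega)
      have h2 := ha g hg (i + c) (by omega) k' hk'
      rw [hrn g] at h2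
      have harg : ((i + (c+1) : ℕ) : ℝ) = ((i + c : ℕ) : ℝ) + 1 := by push_cast; ring
      rw [harg]
      calc ‖F k' ((((i + c : ℕ):ℝ) + 1) * ((b:ℝ)^g)⁻¹) - F k' ((i:ℝ) * ((b:ℝ)^g)⁻¹)‖
          ≤ ‖F k' ((((i + c : ℕ):ℝ) + 1) * ((b:ℝ)^g)⁻¹) - F k' (((i + c : ℕ):ℝ) * ((b:ℝ)^g)⁻¹)‖
            + ‖F k' (((i + c : ℕ):ℝ) * ((b:ℝ)^g)⁻¹) - F k' ((i:ℝ) * ((b:ℝ)^g)⁻¹)‖ :=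
            norm_sub_le_norm_sub_add_norm_sub _ _ _
        _ ≤ r ^ g + (c:ℝ) * r ^ g := add_le_add h2 h1
        _ = ((c+1 : ℕ):ℝ) * r ^ g := by push_cast; ring

  -- division facts
  have hpowdiv : ∀ m : ℕ, m ≤ M → b ^ M / b ^ (M - m) = b ^ m := by
    intro m hm
    rw [Nat.pow_div (by omega) (by omega)]
    congr 1
    omega
  have hAle : ∀ m : ℕ, m ≤ M → p / b ^ (M - m) ≤ b ^ m := by
    intro m hm
    calc p / b ^ (M - m) ≤ b ^ M / b ^ (M - m) := Nat.div_le_div_right hp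
      _ = b ^ m := hpowdiv m hm
  have hEle : ∀ m : ℕ, m ≤ M → q / b ^ (M - m) ≤ b ^ m := by
    intro m hm
    exact le_trans (Nat.div_le_div_right hqp.le) (hAle m hm)
  have hdivstep : ∀ x m : ℕ, m < M → x / b ^ (M - m) = (x / b ^ (M - (m+1))) / b := by
    intro x m hm
    rw [Nat.div_div_eq_div_mul]
    congr 1
    rw [← pow_succ]
    congr 1
    omega
  have hlift : ∀ j m : ℕ, ((j:ℕ):ℝ) * ((b:ℝ)^m)⁻¹ = ((b * j : ℕ):ℝ) * ((b:ℝ)^(m+1))⁻¹ := by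
    intro j m
    have h1 : ((b:ℝ)^m) ≠ 0 := by positivity
    push_cast
    rw [pow_succ]
    field_simp
  -- G-term bound
  have hg : ∀ κ : ℕ, n ≤ κ → ∀ j : ℕ, j ≤ b ^ κ →
      ‖F (min k (κ+1)) ((j:ℝ) * ((b:ℝ)^κ)⁻¹) - F (min k κ) ((j:ℝ) * ((b:ℝ)^κ)⁻¹)‖ ≤
        r ^ (κ+1) := by
    intro κ hκ j hj
    rcases le_or_gt k κ with hkκ | hκk
    · rw [min_eq_left (by omega : k ≤ κ + 1), min_eq_left hkκ]
      simp [le_of_lt (pow_pos hr0 (κ+1))]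
    · rw [min_eq_right (by omega : κ + 1 ≤ k), min_eq_right (by omega : κ ≤ k)]
      have hmem' : (j:ℝ) * ((b:ℝ)^κ)⁻¹ ∈ badicPts b (κ+1) := by
        rw [hlift j κ]
        refine ⟨b * j, ?_, rfl⟩
        calc b * j ≤ b * b ^ κ := Nat.mul_le_mul_left _ hj
          _ = b ^ (κ+1) := by rw [pow_succ]; ring
      have h := hbnd (κ+1) (by omega) _ hmem'
      simp only [Nat.add_sub_cancel] at h
      rw [hrn] at h
      exact h
  -- main induction along generations
  have main : ∀ κ : ℕ, n ≤ κ → κ ≤ M →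
      ‖F (min k κ) (((p / b ^ (M - κ) : ℕ):ℝ) * ((b:ℝ)^κ)⁻¹)
        - F (min k κ) (((q / b ^ (M - κ) : ℕ):ℝ) * ((b:ℝ)^κ)⁻¹)‖ ≤
        (b:ℝ) * r ^ n + 2 * (b:ℝ) * (r ^ (n+1) - r ^ (κ+1)) / (1 - r) := by
    intro κ hκ
    induction κ, hκ using Nat.le_induction with
    | base =>
      intro hnM'
      have hEA : q / b ^ (M - n) ≤ p / b ^ (M - n) := Nat.div_le_div_right hqp.le
      have hce : q / b ^ (M - n) + (p / b ^ (M - n) - q / b ^ (M - n)) = p / b ^ (M - n) := by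
        omega
      -- the count is at most b
      have hpq : p ≤ q + b * b ^ (M - n) := by
        have hr1' : ((p:ℝ) - q) * ((b:ℝ)^M)⁻¹ < (b:ℝ) * ((b:ℝ)^n)⁻¹ := by
          rw [← hts]; exact hub
        have hsplit : (b:ℝ)^M = (b:ℝ)^n * (b:ℝ)^(M-n) := by
          rw [← pow_add]; congr 1; omega
        have hbn : (0:ℝ) < (b:ℝ)^n := pow_pos hb0 n
        have hbMn : (0:ℝ) < (b:ℝ)^(M-n) := pow_pos hb0 (M-n)
        have hbM : (0:ℝ) < (b:ℝ)^M := pow_pos hb0 M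
        have hcast : ((p:ℝ) - q) < (b:ℝ) * (b:ℝ)^(M - n) := by
          have h1 : ((p:ℝ) - q) * ((b:ℝ)^M)⁻¹ * (b:ℝ)^M < (b:ℝ) * ((b:ℝ)^n)⁻¹ * (b:ℝ)^M :=
            mul_lt_mul_of_pos_right hr1' hbM
          rw [mul_assoc, inv_mul_cancel₀ hbM.ne', mul_one] at h1
          rw [hsplit] at h1
          have h2 : (b:ℝ) * ((b:ℝ)^n)⁻¹ * ((b:ℝ)^n * (b:ℝ)^(M-n))
              = (b:ℝ) * (b:ℝ)^(M-n) := by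
            field_simp
          rw [h2] at h1
          exact h1
        have : (p:ℝ) < (q:ℝ) + (b:ℝ) * (b:ℝ)^(M-n) := by linarith
        have : (p:ℝ) < ((q + b * b^(M-n) : ℕ) : ℝ) := by push_cast; linarith
        exact_mod_cast this.le
      have hcb : p / b ^ (M - n) - q / b ^ (M - n) ≤ b := by
        have h1 : p / b ^ (M - n) ≤ (q + b * b ^ (M - n)) / b ^ (M - n) :=
          Nat.div_le_div_right hpq
        rw [Nat.add_mul_div_right _ _ (by positivity : 0 < b ^ (M - n))] at h1
        omega
      have h := chainA n hnn₁ (min k n) (min_le_right k n) (q / b ^ (M - n))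
        (p / b ^ (M - n) - q / b ^ (M - n)) (by rw [hce]; exact hAle n hnM')
      rw [hce] at h
      have hcR : ((p / b ^ (M - n) - q / b ^ (M - n) : ℕ):ℝ) ≤ (b:ℝ) := by
        exact_mod_cast hcb
      calc ‖F (min k n) (((p / b ^ (M - n) : ℕ):ℝ) * ((b:ℝ)^n)⁻¹)
            - F (min k n) (((q / b ^ (M - n) : ℕ):ℝ) * ((b:ℝ)^n)⁻¹)‖
          ≤ ((p / b ^ (M - n) - q / b ^ (M - n) : ℕ):ℝ) * r ^ n := h
        _ ≤ (b:ℝ) * r ^ n :=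
            mul_le_mul_of_nonneg_right hcR (pow_nonneg hr0.le n)
        _ = (b:ℝ) * r ^ n + 2 * (b:ℝ) * (r ^ (n+1) - r ^ (n+1)) / (1 - r) := by
            simp
    | succ κ hκ ih =>
      intro hκM
      have hκM' : κ ≤ M := by omega
      have ihb := ih hκM'
      have hdA : p / b ^ (M - κ) = p / b ^ (M - (κ+1)) / b := hdivstep p κ (by omega)
      have hdE : q / b ^ (M - κ) = q / b ^ (M - (κ+1)) / b := hdivstep q κ (by omega)
      have hA1le : p / b ^ (M - (κ+1)) ≤ b ^ (κ+1) := hAle (κ+1) hκM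
      have hE1le : q / b ^ (M - (κ+1)) ≤ b ^ (κ+1) := hEle (κ+1) hκM
      have hbA : b * (p / b ^ (M - κ)) + (p / b ^ (M - (κ+1))) % b = p / b ^ (M - (κ+1)) := by
        rw [hdA]; exact Nat.div_add_mod _ b
      have hbE : b * (q / b ^ (M - κ)) + (q / b ^ (M - (κ+1))) % b = q / b ^ (M - (κ+1)) := by
        rw [hdE]; exact Nat.div_add_mod _ b
      have hmodcast : ∀ x : ℕ, ((x % b : ℕ):ℝ) ≤ (b:ℝ) - 1 := by
        intro x
        have h1 : x % b ≤ b - 1 := by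
          have := Nat.mod_lt x (show 0 < b by omega); omega
        have h2 : ((x % b : ℕ):ℝ) ≤ ((b - 1 : ℕ):ℝ) := by exact_mod_cast h1
        rwa [Nat.cast_sub (by omega : 1 ≤ b), Nat.cast_one] at h2
      -- edge bounds
      have hedge : ∀ x : ℕ, x / b ^ (M - (κ+1)) ≤ b ^ (κ+1) →
          x / b ^ (M - κ) = x / b ^ (M - (κ+1)) / b →
          ‖F (min k (κ+1)) (((x / b ^ (M - (κ+1)) : ℕ):ℝ) * ((b:ℝ)^(κ+1))⁻¹)
            - F (min k (κ+1)) (((x / b ^ (M - κ) : ℕ):ℝ) * ((b:ℝ)^κ)⁻¹)‖ ≤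
            ((b:ℝ) - 1) * r ^ (κ+1) := by
        intro x hx1 hxd
        have hbx : b * (x / b ^ (M - κ)) + (x / b ^ (M - (κ+1))) % b = x / b ^ (M - (κ+1)) := by
          rw [hxd]; exact Nat.div_add_mod _ b
        have h := chainA (κ+1) (by omega) (min k (κ+1)) (min_le_right _ _)
          (b * (x / b ^ (M - κ))) ((x / b ^ (M - (κ+1))) % b) (by rw [hbx]; exact hx1)
        rw [hbx] at h
        rw [hlift (x / b ^ (M - κ)) κ]
        refine h.trans ?_
        exact mul_le_mul_of_nonneg_right (hmodcast _) (pow_nonneg hr0.le (κ+1))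
      have het := hedge p hA1le hdA
      have hes := hedge q hE1le hdE
      have hgt' := hg κ hκ (p / b ^ (M - κ)) (hAle κ hκM')
      have hgs' := hg κ hκ (q / b ^ (M - κ)) (hEle κ hκM')
      -- pentagon triangle inequality
      set X1 := ((p / b ^ (M - (κ+1)) : ℕ):ℝ) * ((b:ℝ)^(κ+1))⁻¹ with hX1
      set X0 := ((p / b ^ (M - κ) : ℕ):ℝ) * ((b:ℝ)^κ)⁻¹ with hX0
      set Y1 := ((q / b ^ (M - (κ+1)) : ℕ):ℝ) * ((b:ℝ)^(κ+1))⁻¹ with hY1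
      set Y0 := ((q / b ^ (M - κ) : ℕ):ℝ) * ((b:ℝ)^κ)⁻¹ with hY0
      have tri : ‖F (min k (κ+1)) X1 - F (min k (κ+1)) Y1‖ ≤
          ‖F (min k (κ+1)) X1 - F (min k (κ+1)) X0‖
          + (‖F (min k (κ+1)) X0 - F (min k κ) X0‖
          + (‖F (min k κ) X0 - F (min k κ) Y0‖
          + (‖F (min k κ) Y0 - F (min k (κ+1)) Y0‖
          + ‖F (min k (κ+1)) Y0 - F (min k (κ+1)) Y1‖))) := by
        calc ‖F (min k (κ+1)) X1 - F (min k (κ+1)) Y1‖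
            ≤ ‖F (min k (κ+1)) X1 - F (min k (κ+1)) X0‖
              + ‖F (min k (κ+1)) X0 - F (min k (κ+1)) Y1‖ :=
              norm_sub_le_norm_sub_add_norm_sub _ _ _
          _ ≤ ‖F (min k (κ+1)) X1 - F (min k (κ+1)) X0‖
              + (‖F (min k (κ+1)) X0 - F (min k κ) X0‖
                + ‖F (min k κ) X0 - F (min k (κ+1)) Y1‖) := by
              gcongr
              exact norm_sub_le_norm_sub_add_norm_sub _ _ _
          _ ≤ ‖F (min k (κ+1)) X1 - F (min k (κ+1)) X0‖
              + (‖F (min k (κ+1)) X0 - F (min k κ) X0‖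
                + (‖F (min k κ) X0 - F (min k κ) Y0‖
                  + ‖F (min k κ) Y0 - F (min k (κ+1)) Y1‖)) := by
              gcongr
              exact norm_sub_le_norm_sub_add_norm_sub _ _ _
          _ ≤ _ := by
              gcongr
              exact norm_sub_le_norm_sub_add_norm_sub _ _ _
      have hgsrev : ‖F (min k κ) Y0 - F (min k (κ+1)) Y0‖ ≤ r ^ (κ+1) := by
        rw [norm_sub_rev]; exact hgs'
      have hesrev : ‖F (min k (κ+1)) Y0 - F (min k (κ+1)) Y1‖ ≤ ((b:ℝ) - 1) * r ^ (κ+1) := by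
        rw [norm_sub_rev]; exact hes
      have hsum : ‖F (min k (κ+1)) X1 - F (min k (κ+1)) Y1‖ ≤
          ((b:ℝ) * r ^ n + 2 * (b:ℝ) * (r ^ (n+1) - r ^ (κ+1)) / (1 - r))
          + 2 * (b:ℝ) * r ^ (κ+1) := by
        have := tri
        have htot : ‖F (min k (κ+1)) X1 - F (min k (κ+1)) X0‖
            + (‖F (min k (κ+1)) X0 - F (min k κ) X0‖
            + (‖F (min k κ) X0 - F (min k κ) Y0‖
            + (‖F (min k κ) Y0 - F (min k (κ+1)) Y0‖
            + ‖F (min k (κ+1)) Y0 - F (min k (κ+1)) Y1‖))) ≤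
            ((b:ℝ) - 1) * r ^ (κ+1) + (r ^ (κ+1)
              + (((b:ℝ) * r ^ n + 2 * (b:ℝ) * (r ^ (n+1) - r ^ (κ+1)) / (1 - r))
              + (r ^ (κ+1) + ((b:ℝ) - 1) * r ^ (κ+1)))) := by
          gcongr <;> first | exact het | exact hgt' | exact ihb | exact hgsrev | exact hesrev
        calc ‖F (min k (κ+1)) X1 - F (min k (κ+1)) Y1‖ ≤ _ := tri
          _ ≤ _ := htot
          _ = ((b:ℝ) * r ^ n + 2 * (b:ℝ) * (r ^ (n+1) - r ^ (κ+1)) / (1 - r))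
              + 2 * (b:ℝ) * r ^ (κ+1) := by ring
      refine hsum.trans (le_of_eq ?_)
      field_simp
      ring
  -- telescoping in k beyond generation M
  have teleB : ∀ u ∈ badicPts b M, ∀ k' : ℕ, M ≤ k' →
      ‖F k' u - F M u‖ ≤ (r ^ (M+1) - r ^ (k'+1)) / (1 - r) := by
    intro u hu k' hk'
    induction k', hk' using Nat.le_induction with
    | base => simp
    | succ k' hk' ih =>
      have hmem' : u ∈ badicPts b (k'+1) := badicPts_mono (by omega) (by omega) hu
      have h := hbnd (k'+1) (by omega) u hmem'
      simp only [Nat.add_sub_cancel] at h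
      rw [hrn] at h
      calc ‖F (k'+1) u - F M u‖
          ≤ ‖F (k'+1) u - F k' u‖ + ‖F k' u - F M u‖ :=
            norm_sub_le_norm_sub_add_norm_sub _ _ _
        _ ≤ r ^ (k'+1) + (r ^ (M+1) - r ^ (k'+1)) / (1 - r) := add_le_add h ih
        _ = (r ^ (M+1) - r ^ (k'+1+1)) / (1 - r) := by field_simp; ring
  -- specialize the main bound at κ = M
  have mainM := main M hnM le_rfl
  simp only [Nat.sub_self, pow_zero, Nat.div_one] at mainM
  have htmem : t ∈ badicPts b M := ⟨p, hp, htdef⟩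
  have hsmem : s ∈ badicPts b M := ⟨q, by omega, hsdef⟩
  -- uniform bound
  have hBnd : ‖F k t - F k s‖ ≤ (b:ℝ) * r ^ n + 2 * (b:ℝ) * r ^ (n+1) / (1 - r) := by
    rcases le_or_gt k M with hkM | hMk
    · rw [min_eq_left hkM] at mainM
      have h1 : ((p:ℕ):ℝ) * ((b:ℝ)^M)⁻¹ = t := htdef.symm
      have h2 : ((q:ℕ):ℝ) * ((b:ℝ)^M)⁻¹ = s := hsdef.symm
      rw [h1, h2] at mainM
      refine mainM.trans ?_
      have hMp : (0:ℝ) ≤ r ^ (M+1) := pow_nonneg hr0.le _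
      have hb2 : (0:ℝ) ≤ (b:ℝ) := hb0.le
      have hnum : 2 * (b:ℝ) * (r ^ (n+1) - r ^ (M+1)) ≤ 2 * (b:ℝ) * r ^ (n+1) := by nlinarith
      have hdiv : 2 * (b:ℝ) * (r ^ (n+1) - r ^ (M+1)) / (1 - r)
          ≤ 2 * (b:ℝ) * r ^ (n+1) / (1 - r) := by
        rw [div_le_div_iff₀ h1r h1r]
        exact mul_le_mul_of_nonneg_right hnum h1r.le
      linarith
    · rw [min_eq_right hMk.le] at mainM
      have h1 : ((p:ℕ):ℝ) * ((b:ℝ)^M)⁻¹ = t := htdef.symm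
      have h2 : ((q:ℕ):ℝ) * ((b:ℝ)^M)⁻¹ = s := hsdef.symm
      rw [h1, h2] at mainM
      have ht1 := teleB t htmem k hMk.le
      have hs1 := teleB s hsmem k hMk.le
      have hs1' : ‖F M s - F k s‖ ≤ (r ^ (M+1) - r ^ (k+1)) / (1 - r) := by
        rw [norm_sub_rev]; exact hs1
      have tri : ‖F k t - F k s‖ ≤ ‖F k t - F M t‖ + (‖F M t - F M s‖ + ‖F M s - F k s‖) := by
        calc ‖F k t - F k s‖ ≤ ‖F k t - F M t‖ + ‖F M t - F k s‖ :=
              norm_sub_le_norm_sub_add_norm_sub _ _ _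
          _ ≤ ‖F k t - F M t‖ + (‖F M t - F M s‖ + ‖F M s - F k s‖) := by
              gcongr
              exact norm_sub_le_norm_sub_add_norm_sub _ _ _
      have hsum : ‖F k t - F k s‖ ≤
          (r ^ (M+1) - r ^ (k+1)) / (1 - r)
            + (((b:ℝ) * r ^ n + 2 * (b:ℝ) * (r ^ (n+1) - r ^ (M+1)) / (1 - r))
            + (r ^ (M+1) - r ^ (k+1)) / (1 - r)) := by
        refine tri.trans ?_
        gcongr <;> first | exact ht1 | exact mainM | exact hs1'
      refine hsum.trans ?_
      have hb2R : (2:ℝ) ≤ (b:ℝ) := by exact_mod_cast hb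
      have hnum : 2 * (r ^ (M+1) - r ^ (k+1)) + 2 * (b:ℝ) * (r ^ (n+1) - r ^ (M+1))
          ≤ 2 * (b:ℝ) * r ^ (n+1) := by
        nlinarith [pow_nonneg hr0.le (k+1), pow_nonneg hr0.le (M+1)]
      have hdiv : (2 * (r ^ (M+1) - r ^ (k+1)) + 2 * (b:ℝ) * (r ^ (n+1) - r ^ (M+1))) / (1 - r)
          ≤ 2 * (b:ℝ) * r ^ (n+1) / (1 - r) := by
        rw [div_le_div_iff₀ h1r h1r]
        exact mul_le_mul_of_nonneg_right hnum h1r.le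
      have e1 : (2 * (r ^ (M+1) - r ^ (k+1)) + 2 * (b:ℝ) * (r ^ (n+1) - r ^ (M+1))) / (1 - r)
          = 2 * ((r ^ (M+1) - r ^ (k+1)) / (1 - r))
            + 2 * (b:ℝ) * (r ^ (n+1) - r ^ (M+1)) / (1 - r) := by ring
      rw [e1] at hdiv
      linarith
  -- final arithmetic
  refine hBnd.trans ?_
  have hrnn : (0:ℝ) ≤ r ^ n := pow_nonneg hr0.le n
  have hrfac : (0:ℝ) ≤ (b:ℝ) * r ^ n * (1 - r) := by positivity
  have hkey : ((b:ℝ) * r ^ n + 2 * (b:ℝ) * r ^ (n+1) / (1 - r)) * (1 - r) ≤ 2 * (b:ℝ) * r ^ n := by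
    have hcan : 2 * (b:ℝ) * r ^ (n+1) / (1 - r) * (1 - r) = 2 * (b:ℝ) * r ^ (n+1) :=
      div_mul_cancel₀ _ h1r.ne'
    have hpow : r ^ (n+1) = r * r ^ n := by rw [pow_succ]; ring
    nlinarith [hrfac]
  have h2 : (b:ℝ) * r ^ n + 2 * (b:ℝ) * r ^ (n+1) / (1 - r) ≤ 2 * (b:ℝ) * r ^ n / (1 - r) :=
    (le_div_iff₀ h1r).mpr hkey
  refine h2.trans ?_
  have h3 : 2 * (b:ℝ) * r ^ n / (1 - r) = 2 * (b:ℝ) / (1 - r) * r ^ n := by ring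
  rw [h3]
  exact mul_le_mul_of_nonneg_left hrpow_ts (div_nonneg (by positivity) h1r.le)



/-- Deterministic chaining lemma: if for all `n ≥ n₁` the increments of all `F_k`, `k ≤ n`,
over `b`-adic intervals of generation `n` are bounded by `b^{-nγ}`, and
`max_{t ∈ T_n} |F_n(t) - F_{n-1}(t)| ≤ b^{-nγ}`, then for `b`-adic `t, s` with
`|t - s| ≤ b^{-n₁}` one has `sup_{k ≥ 1} |F_k(t) - F_k(s)| ≤ C_γ |t-s|^γ`
with `C_γ = 2b/(1 - b^{-γ})`. -/
theorem stmt_4 (b : ℕ) (hb : 2 ≤ b) (γ : ℝ) (hγ : 0 < γ)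
    (F : ℕ → ℝ → ℂ) (n₁ : ℕ) (hn₁ : 1 ≤ n₁)
    (ha : ∀ n : ℕ, n₁ ≤ n → ∀ i : ℕ, i < b ^ n → ∀ k : ℕ, k ≤ n →
      ‖F k (((i : ℝ) + 1) * ((b : ℝ) ^ n)⁻¹) - F k ((i : ℝ) * ((b : ℝ) ^ n)⁻¹)‖ ≤
        (b : ℝ) ^ (-(n : ℝ) * γ))
    (hbnd : ∀ n : ℕ, n₁ ≤ n → ∀ t ∈ badicPts b n,
      ‖F n t - F (n - 1) t‖ ≤ (b : ℝ) ^ (-(n : ℝ) * γ)) :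
    ∀ t ∈ ⋃ M ≥ 1, badicPts b M, ∀ s ∈ ⋃ M ≥ 1, badicPts b M,
      |t - s| ≤ ((b : ℝ) ^ n₁)⁻¹ →
      ∀ k : ℕ, 1 ≤ k →
        ‖F k t - F k s‖ ≤ 2 * b / (1 - (b : ℝ) ^ (-γ)) * |t - s| ^ γ := by
  intro t ht s hs hts k hk
  simp only [Set.mem_iUnion] at ht hs
  obtain ⟨Mt, -, hMt⟩ := ht
  obtain ⟨Ms, -, hMs⟩ := hs
  have hb0 : 0 < b := by omega
  have hbR : (0:ℝ) < (b:ℝ) := by exact_mod_cast hb0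
  have hM : t ∈ badicPts b (max Mt Ms) := badicPts_mono hb0 (le_max_left _ _) hMt
  have hM' : s ∈ badicPts b (max Mt Ms) := badicPts_mono hb0 (le_max_right _ _) hMs
  set M := max Mt Ms with hMdef
  obtain ⟨pp, hpp, hteq⟩ := hM
  obtain ⟨qq, hqq, hseq⟩ := hM'
  subst hteq hseq
  have hinv0 : (0:ℝ) < ((b:ℝ)^M)⁻¹ := by positivity
  rcases lt_trichotomy pp qq with hlt | heq | hgt
  · have hdpos : (0:ℝ) < (qq:ℝ) * ((b:ℝ)^M)⁻¹ - (pp:ℝ) * ((b:ℝ)^M)⁻¹ := by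
      have : (pp:ℝ) < qq := by exact_mod_cast hlt
      nlinarith
    have habs : |(pp:ℝ) * ((b:ℝ)^M)⁻¹ - (qq:ℝ) * ((b:ℝ)^M)⁻¹|
        = (qq:ℝ) * ((b:ℝ)^M)⁻¹ - (pp:ℝ) * ((b:ℝ)^M)⁻¹ := by
      rw [abs_sub_comm, abs_of_pos hdpos]
    rw [habs] at hts ⊢
    rw [norm_sub_rev]
    exact key_chain b hb γ hγ F n₁ hn₁ ha hbnd M qq pp hlt hqq hts k
  · subst heq
    simp [Real.zero_rpow hγ.ne']
  · have hdpos : (0:ℝ) < (pp:ℝ) * ((b:ℝ)^M)⁻¹ - (qq:ℝ) * ((b:ℝ)^M)⁻¹ := by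
      have : (qq:ℝ) < pp := by exact_mod_cast hgt
      nlinarith
    have habs : |(pp:ℝ) * ((b:ℝ)^M)⁻¹ - (qq:ℝ) * ((b:ℝ)^M)⁻¹|
        = (pp:ℝ) * ((b:ℝ)^M)⁻¹ - (qq:ℝ) * ((b:ℝ)^M)⁻¹ := abs_of_pos hdpos
    rw [habs] at hts ⊢
    exact key_chain b hb γ hγ F n₁ hn₁ ha hbnd M pp qq hgt hpp hts k
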